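/- Let L : ℝ^{K·d} → ℝ be convex and differentiable, and let F : ℝ^N → ℝ^{K·d} be a differentiable map such that each coordinate F_j satisfies the first-order residual bound |F_j(θ') − F_j(θ) − ⟨∇F_j(θ), θ'−θ⟩| ≤ ρ for all θ, θ' in a set S. If additionally Σ_j |∂L/∂F_j| ≤ Λ at every point of S, then for all θ, θ' ∈ S: L(F(θ')) − L(F(θ)) ≥ ⟨∇_θ(L∘F)(θ), θ'−θ⟩ − Λρ, i.e. L∘F is (Λρ)-nearly convex on S. -/

import Mathlib

open scoped RealInnerProductSpace BigOperators


private lemma subgrad_ineq {E : Type*} [NormedAddCommGroup E] [InnerProductSpace ℝ E]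
    [CompleteSpace E]
    {L : E → ℝ} (hconv : ConvexOn ℝ Set.univ L) {x g : E}
    (hg : HasGradientAt L g x) (y : E) :
    L x + ⟪g, y - x⟫ ≤ L y := by
  set φ : ℝ → ℝ := fun t => L (x + t • (y - x)) with hφ
  have hφconv : ConvexOn ℝ Set.univ φ := by
    have h := hconv.comp_affineMap (AffineMap.lineMap x y)
    have : φ = L ∘ (AffineMap.lineMap x y) := by
      funext t
      simp only [φ, Function.comp_apply, AffineMap.lineMap_apply, vsub_eq_sub, vadd_eq_add]
      congr 1
      module
    rw [this]
    simpa using h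
  have hd : HasDerivAt φ ⟪g, y - x⟫ 0 := by
    have h1 : HasDerivAt (fun t : ℝ => x + t • (y - x)) (y - x) 0 := by
      simpa using ((hasDerivAt_id (0:ℝ)).smul_const (y - x)).const_add x
    have h2 : HasFDerivAt L (InnerProductSpace.toDual ℝ E g) x := hg.hasFDerivAt
    have h3 : HasFDerivAt L (InnerProductSpace.toDual ℝ E g) (x + (0:ℝ) • (y - x)) := by
      simpa using h2
    simpa [InnerProductSpace.toDual_apply_apply, φ, Function.comp_def] using h3.comp_hasDerivAt 0 h1
  have := hφconv.le_slope_of_hasDerivAt (Set.mem_univ (0:ℝ)) (Set.mem_univ (1:ℝ))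
    one_pos hd
  have hslope : slope φ 0 1 = L y - L x := by
    simp [slope, φ]
  rw [hslope] at this
  linarith

/-- a convex differentiable outer function composed with a
nearly-linear inner map is nearly convex: if each coordinate of `F` has
first-order residual at most `ρ` on `S` and `Σ_j |∂L/∂F_j| ≤ Λ` on `S`, then
`L∘F` is `(Λρ)`-nearly convex on `S` (the gradient of `L∘F` at `θ` being
`Σ_j (∂L/∂F_j) • ∇F_j(θ)` by the chain rule). -/
theorem stmt_16 {N q : ℕ} (ρ Λ : ℝ) (hρ : 0 ≤ ρ) (hΛ : 0 ≤ Λ)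
    (L : EuclideanSpace ℝ (Fin q) → ℝ)
    (hconv : ConvexOn ℝ Set.univ L)
    (gL : EuclideanSpace ℝ (Fin q) → EuclideanSpace ℝ (Fin q))
    (hgL : ∀ y, HasGradientAt L (gL y) y)
    (F : EuclideanSpace ℝ (Fin N) → EuclideanSpace ℝ (Fin q))
    (gF : Fin q → EuclideanSpace ℝ (Fin N) → EuclideanSpace ℝ (Fin N))
    (hgF : ∀ j θ, HasGradientAt (fun θ' => F θ' j) (gF j θ) θ)
    (S : Set (EuclideanSpace ℝ (Fin N)))
    (hres : ∀ θ ∈ S, ∀ θ' ∈ S, ∀ j,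
      |F θ' j - F θ j - ⟪gF j θ, θ' - θ⟫| ≤ ρ)
    (hsum : ∀ θ ∈ S, (∑ j, |(gL (F θ)) j|) ≤ Λ) :
    ∀ θ ∈ S, ∀ θ' ∈ S,
      L (F θ') - L (F θ) ≥ ⟪∑ j, (gL (F θ)) j • gF j θ, θ' - θ⟫ - Λ * ρ := by
  intro θ hθ θ' hθ'
  set a : EuclideanSpace ℝ (Fin q) := gL (F θ) with ha
  have h1 : L (F θ) + ⟪a, F θ' - F θ⟫ ≤ L (F θ') :=
    subgrad_ineq hconv (hgL (F θ)) (F θ')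
  have hinner1 : ⟪a, F θ' - F θ⟫ = ∑ j, a j * (F θ' j - F θ j) := by
    simp [PiLp.inner_apply, PiLp.sub_apply]
    exact Finset.sum_congr rfl fun i _ => mul_comm _ _
  have hinner2 : ⟪∑ j, a j • gF j θ, θ' - θ⟫ = ∑ j, a j * ⟪gF j θ, θ' - θ⟫ := by
    rw [sum_inner]
    simp [real_inner_smul_left, Finset.mul_sum, mul_assoc]
  have key : ∀ j, a j * ⟪gF j θ, θ' - θ⟫ - |a j| * ρ ≤ a j * (F θ' j - F θ j) := by
    intro j
    have h := hres θ hθ θ' hθ' j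
    have habs : |a j * (F θ' j - F θ j - ⟪gF j θ, θ' - θ⟫)| ≤ |a j| * ρ := by
      rw [abs_mul]
      exact mul_le_mul_of_nonneg_left h (abs_nonneg _)
    have h2 := (abs_le.mp habs).1
    nlinarith [h2]
  have hsum2 : ∑ j, (a j * ⟪gF j θ, θ' - θ⟫ - |a j| * ρ) ≤ ∑ j, a j * (F θ' j - F θ j) :=
    Finset.sum_le_sum fun j _ => key j
  have hΛρ : ∑ j, |a j| * ρ ≤ Λ * ρ := by
    rw [← Finset.sum_mul]
    exact mul_le_mul_of_nonneg_right (hsum θ hθ) hρ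
  rw [Finset.sum_sub_distrib] at hsum2
  rw [hinner2]
  have := h1
  rw [hinner1] at this
  linarith
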